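/- Let Â, B̂ be in SL(2,ℂ) and set A = Φ*(Â), B = Φ*(B̂) and C = (BA)⁻¹ in SL(3,ℂ). Write a = tr(A), b = tr(B), c = tr(C). Then σ₊(A,B,C) = σ₋(A,B,C) and (σ₊(A,B,C) − a − b − c − 1)² = 4(a+1)(b+1)(c+1); equivalently σ₊(A,B,C) is a root of X² − 2(a+b+c+1)X − 4abc + a² + b² + c² − 2ab − 2ac − 2bc − 2a − 2b − 2c − 3. -/
import Mathlib


open Matrix

/-- The irreducible representation of `SL(2,ℂ)` on `ℂ³` at the level of matrices. -/
noncomputable def PhiStar (M : Matrix (Fin 2) (Fin 2) ℂ) : Matrix (Fin 3) (Fin 3) ℂ :=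
  !![(M 0 0) ^ 2, -(Real.sqrt 2 : ℂ) * M 0 0 * M 0 1, -(M 0 1) ^ 2;
     -(Real.sqrt 2 : ℂ) * M 0 0 * M 1 0, M 0 0 * M 1 1 + M 0 1 * M 1 0,
       (Real.sqrt 2 : ℂ) * M 0 1 * M 1 1;
     -(M 1 0) ^ 2, (Real.sqrt 2 : ℂ) * M 1 0 * M 1 1, (M 1 1) ^ 2]

lemma phiStar_mul (M N : Matrix (Fin 2) (Fin 2) ℂ) :
    PhiStar M * PhiStar N = PhiStar (M * N) := by
  have hs : (Real.sqrt 2 : ℂ) ^ 2 = 2 := by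
    norm_cast
    rw [Real.sq_sqrt] <;> norm_num
  ext i j
  fin_cases i <;> fin_cases j <;>
    simp [PhiStar, Matrix.mul_apply, Fin.sum_univ_three, Fin.sum_univ_two]
  · linear_combination ((M 0 0 * M 0 1 * N 0 0 * N 1 0)) * hs
  · ring
  · linear_combination ((-M 0 0 * M 0 1 * N 0 1 * N 1 1)) * hs
  · ring
  · linear_combination ((M 0 0 * M 1 0 * N 0 0 * N 0 1 + M 0 1 * M 1 1 * N 1 0 * N 1 1)) * hs
  · ring
  · linear_combination ((-M 1 0 * M 1 1 * N 0 0 * N 1 0)) * hs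
  · ring
  · linear_combination ((M 1 0 * M 1 1 * N 0 1 * N 1 1)) * hs

lemma phiStar_one : PhiStar 1 = 1 := by
  ext i j
  fin_cases i <;> fin_cases j <;>
    simp [PhiStar, Matrix.one_apply, Matrix.vecHead, Matrix.vecTail]

lemma phiStar_inv (M : Matrix (Fin 2) (Fin 2) ℂ) (h : M.det = 1) :
    (PhiStar M)⁻¹ = PhiStar !![M 1 1, -M 0 1; -M 1 0, M 0 0] := by
  rw [Matrix.det_fin_two] at h
  have h2 : !![M 1 1, -M 0 1; -M 1 0, M 0 0] * M = 1 := by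
    ext i j
    fin_cases i <;> fin_cases j <;>
      simp [Matrix.mul_apply, Fin.sum_univ_two, Matrix.one_apply]
    all_goals first
      | linear_combination h
      | linear_combination -h
      | ring
  refine Matrix.inv_eq_left_inv ?_
  rw [phiStar_mul, h2, phiStar_one]

lemma trace_phiStar (M : Matrix (Fin 2) (Fin 2) ℂ) :
    (PhiStar M).trace = M 0 0 ^ 2 + M 0 0 * M 1 1 + M 0 1 * M 1 0 + M 1 1 ^ 2 := by
  simp [PhiStar, Matrix.trace_fin_three]
  ring

theorem shape_invariant_quadratic_of_irreducible_image
    (Ah Bh : Matrix (Fin 2) (Fin 2) ℂ) (hA : Ah.det = 1) (hB : Bh.det = 1) :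
    (let A := PhiStar Ah; let B := PhiStar Bh; let C := (B * A)⁻¹;
     let a := A.trace; let b := B.trace; let c := C.trace;
     let σp := (A⁻¹ * B).trace - (A⁻¹).trace * B.trace;
     let σm := (B⁻¹ * A).trace - (B⁻¹).trace * A.trace;
     σp = σm ∧
     (σp - a - b - c - 1) ^ 2 = 4 * (a + 1) * (b + 1) * (c + 1) ∧
     σp ^ 2 - 2 * (a + b + c + 1) * σp - 4 * a * b * c + a ^ 2 + b ^ 2 + c ^ 2
       - 2 * a * b - 2 * a * c - 2 * b * c - 2 * a - 2 * b - 2 * c - 3 = 0) := by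
  have hdA : Ah 0 0 * Ah 1 1 - Ah 0 1 * Ah 1 0 = 1 := by
    rw [Matrix.det_fin_two] at hA; exact hA
  have hdB : Bh 0 0 * Bh 1 1 - Bh 0 1 * Bh 1 0 = 1 := by
    rw [Matrix.det_fin_two] at hB; exact hB
  have hAi := phiStar_inv Ah hA
  have hBi := phiStar_inv Bh hB
  have hBAi : (PhiStar Bh * PhiStar Ah)⁻¹ =
      PhiStar !![(Bh * Ah) 1 1, -(Bh * Ah) 0 1; -(Bh * Ah) 1 0, (Bh * Ah) 0 0] := by
    rw [phiStar_mul]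
    exact phiStar_inv _ (by rw [Matrix.det_mul, hA, hB, mul_one])
  refine ⟨?_, ?_, ?_⟩
  · rw [hAi, hBi, phiStar_mul, phiStar_mul]
    simp only [trace_phiStar]
    simp [Matrix.mul_apply, Fin.sum_univ_two]
    ring
  · rw [hAi, hBAi, phiStar_mul]
    simp only [trace_phiStar]
    simp [Matrix.mul_apply, Fin.sum_univ_two]
    linear_combination ((-2 * Ah 0 0 ^ 2 * Bh 0 0 ^ 3 * Bh 1 1 - 2 * Ah 0 0 ^ 2 * Bh 0 0 ^ 2 * Bh 0 1 * Bh 1 0 - 2 * Ah 0 0 ^ 2 * Bh 0 0 ^ 2 * Bh 1 1 ^ 2 + 2 * Ah 0 0 ^ 2 * Bh 0 0 ^ 2 - 4 * Ah 0 0 ^ 2 * Bh 0 0 * Bh 0 1 * Bh 1 0 * Bh 1 1 - 2 * Ah 0 0 ^ 2 * Bh 0 0 * Bh 1 1 ^ 3 - 2 * Ah 0 0 ^ 2 * Bh 0 1 ^ 2 * Bh 1 0 ^ 2 - 2 * Ah 0 0 ^ 2 * Bh 0 1 * Bh 1 0 * Bh 1 1 ^ 2 + 2 * Ah 0 0 ^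 2 * Bh 1 1 ^ 2 + 2 * Ah 0 0 ^ 2 + 4 * Ah 0 0 * Ah 0 1 * Bh 0 0 ^ 3 * Bh 1 0 + 4 * Ah 0 0 * Ah 0 1 * Bh 0 0 ^ 2 * Bh 1 0 * Bh 1 1 - 4 * Ah 0 0 * Ah 0 1 * Bh 0 0 * Bh 1 0 * Bh 1 1 ^ 2 - 4 * Ah 0 0 * Ah 0 1 * Bh 1 0 * Bh 1 1 ^ 3 + 4 * Ah 0 0 * Ah 1 0 * Bh 0 0 ^ 3 * Bh 0 1 + 4 * Ah 0 0 * Ah 1 0 * Bh 0 0 ^ 2 * Bh 0 1 * Bh 1 1 - 4 * Ah 0 0 * Ah 1 0 * Bh 0 0 * Bh 0 1 * Bh 1 1 ^ 2 - 4 * Ah 0 0 * Ah 1 0 * Bh 0 1 * Bh 1 1 ^ 3 - 3 * Ah 0 0 * Ah 1 1 * Bh 0 0 ^ 4 - 2 * Ah 0 0 * Ah 1 1 * Bh 0 0 ^ 3 * Bh 1 1 - 2 * Ah 0 0 * Ah 1 1 * Bh 0 0 ^ 2 * Bh 0 1 * Bh 1 0 + Ah 0 0 * Ah 1 1 * Bh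 0 0 ^ 2 * Bh 1 1 ^ 2 + 2 * Ah 0 0 * Ah 1 1 * Bh 0 0 ^ 2 - 2 * Ah 0 0 * Ah 1 1 * Bh 0 0 * Bh 0 1 * Bh 1 0 * Bh 1 1 - 2 * Ah 0 0 * Ah 1 1 * Bh 0 0 * Bh 1 1 ^ 3 + 2 * Ah 0 0 * Ah 1 1 * Bh 0 0 * Bh 1 1 - Ah 0 0 * Ah 1 1 * Bh 0 1 ^ 2 * Bh 1 0 ^ 2 - 2 * Ah 0 0 * Ah 1 1 * Bh 0 1 * Bh 1 0 * Bh 1 1 ^ 2 + 2 * Ah 0 0 * Ah 1 1 * Bh 0 1 * Bh 1 0 - 3 * Ah 0 0 * Ah 1 1 * Bh 1 1 ^ 4 + 2 * Ah 0 0 * Ah 1 1 * Bh 1 1 ^ 2 + 3 * Ah 0 0 * Ah 1 1 + 4 * Ah 0 1 ^ 2 * Bh 0 0 ^ 2 * Bh 1 0 ^ 2 + 12 * Ah 0 1 ^ 2 * Bh 0 0 * Bh 1 0 ^ 2 * Bh 1 1 - 4 * Ah 0 1 ^ 2 * Bh 0 1 * Bh 1 0 ^ 3 + 4 * Ah 0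 1 ^ 2 * Bh 1 0 ^ 2 * Bh 1 1 ^ 2 - 4 * Ah 0 1 ^ 2 * Bh 1 0 ^ 2 - Ah 0 1 * Ah 1 0 * Bh 0 0 ^ 4 - 6 * Ah 0 1 * Ah 1 0 * Bh 0 0 ^ 3 * Bh 1 1 + 10 * Ah 0 1 * Ah 1 0 * Bh 0 0 ^ 2 * Bh 0 1 * Bh 1 0 - Ah 0 1 * Ah 1 0 * Bh 0 0 ^ 2 * Bh 1 1 ^ 2 + 6 * Ah 0 1 * Ah 1 0 * Bh 0 0 ^ 2 + 18 * Ah 0 1 * Ah 1 0 * Bh 0 0 * Bh 0 1 * Bh 1 0 * Bh 1 1 - 6 * Ah 0 1 * Ah 1 0 * Bh 0 0 * Bh 1 1 ^ 3 - 2 * Ah 0 1 * Ah 1 0 * Bh 0 0 * Bh 1 1 - 7 * Ah 0 1 * Ah 1 0 * Bh 0 1 ^ 2 * Bh 1 0 ^ 2 + 10 * Ah 0 1 * Ah 1 0 * Bh 0 1 * Bh 1 0 * Bh 1 1 ^ 2 - 2 * Ah 0 1 * Ah 1 0 * Bh 0 1 * Bh 1 0 - Ah 0 1 * Ah 1 0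 * Bh 1 1 ^ 4 + 6 * Ah 0 1 * Ah 1 0 * Bh 1 1 ^ 2 + 5 * Ah 0 1 * Ah 1 0 - 4 * Ah 0 1 * Ah 1 1 * Bh 0 0 ^ 3 * Bh 1 0 - 4 * Ah 0 1 * Ah 1 1 * Bh 0 0 ^ 2 * Bh 1 0 * Bh 1 1 + 4 * Ah 0 1 * Ah 1 1 * Bh 0 0 * Bh 1 0 * Bh 1 1 ^ 2 + 4 * Ah 0 1 * Ah 1 1 * Bh 1 0 * Bh 1 1 ^ 3 + 4 * Ah 1 0 ^ 2 * Bh 0 0 ^ 2 * Bh 0 1 ^ 2 + 12 * Ah 1 0 ^ 2 * Bh 0 0 * Bh 0 1 ^ 2 * Bh 1 1 - 4 * Ah 1 0 ^ 2 * Bh 0 1 ^ 3 * Bh 1 0 + 4 * Ah 1 0 ^ 2 * Bh 0 1 ^ 2 * Bh 1 1 ^ 2 - 4 * Ah 1 0 ^ 2 * Bh 0 1 ^ 2 - 4 * Ah 1 0 * Ah 1 1 * Bh 0 0 ^ 3 * Bh 0 1 - 4 * Ah 1 0 * Ah 1 1 * Bh 0 0 ^ 2 * Bh 0 1 * Bh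 1 1 + 4 * Ah 1 0 * Ah 1 1 * Bh 0 0 * Bh 0 1 * Bh 1 1 ^ 2 + 4 * Ah 1 0 * Ah 1 1 * Bh 0 1 * Bh 1 1 ^ 3 - 2 * Ah 1 1 ^ 2 * Bh 0 0 ^ 3 * Bh 1 1 - 2 * Ah 1 1 ^ 2 * Bh 0 0 ^ 2 * Bh 0 1 * Bh 1 0 - 2 * Ah 1 1 ^ 2 * Bh 0 0 ^ 2 * Bh 1 1 ^ 2 + 2 * Ah 1 1 ^ 2 * Bh 0 0 ^ 2 - 4 * Ah 1 1 ^ 2 * Bh 0 0 * Bh 0 1 * Bh 1 0 * Bh 1 1 - 2 * Ah 1 1 ^ 2 * Bh 0 0 * Bh 1 1 ^ 3 - 2 * Ah 1 1 ^ 2 * Bh 0 1 ^ 2 * Bh 1 0 ^ 2 - 2 * Ah 1 1 ^ 2 * Bh 0 1 * Bh 1 0 * Bh 1 1 ^ 2 + 2 * Ah 1 1 ^ 2 * Bh 1 1 ^ 2 + 2 * Ah 1 1 ^ 2 - Bh 0 0 ^ 4 - 2 * Bh 0 0 ^ 3 * Bh 1 1 - 2 * Bh 0 0 ^ 2 * Bh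 0 1 * Bh 1 0 + 3 * Bh 0 0 ^ 2 * Bh 1 1 ^ 2 + 2 * Bh 0 0 ^ 2 - 6 * Bh 0 0 * Bh 0 1 * Bh 1 0 * Bh 1 1 - 2 * Bh 0 0 * Bh 1 1 ^ 3 - 2 * Bh 0 0 * Bh 1 1 - 3 * Bh 0 1 ^ 2 * Bh 1 0 ^ 2 - 2 * Bh 0 1 * Bh 1 0 * Bh 1 1 ^ 2 - 2 * Bh 0 1 * Bh 1 0 - Bh 1 1 ^ 4 + 2 * Bh 1 1 ^ 2 + 1)) * hdA + ((-3 * Ah 0 0 ^ 4 * Bh 0 0 * Bh 1 1 - Ah 0 0 ^ 4 * Bh 0 1 * Bh 1 0 - Ah 0 0 ^ 4 + 4 * Ah 0 0 ^ 3 * Ah 0 1 * Bh 0 0 * Bh 1 0 - 4 * Ah 0 0 ^ 3 * Ah 0 1 * Bh 1 0 * Bh 1 1 + 4 * Ah 0 0 ^ 3 * Ah 1 0 * Bh 0 0 * Bh 0 1 - 4 * Ah 0 0 ^ 3 * Ah 1 0 * Bh 0 1 * Bh 1 1 + 4 * Ah 0 0 ^ 2 * Ah 0 1 ^ 2 * Bh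 1 0 ^ 2 - 4 * Ah 0 0 ^ 2 * Ah 0 1 * Ah 1 0 * Bh 0 0 ^ 2 - 4 * Ah 0 0 ^ 2 * Ah 0 1 * Ah 1 0 * Bh 0 0 * Bh 1 1 + 4 * Ah 0 0 ^ 2 * Ah 0 1 * Ah 1 0 * Bh 0 1 * Bh 1 0 - 4 * Ah 0 0 ^ 2 * Ah 0 1 * Ah 1 0 * Bh 1 1 ^ 2 - 4 * Ah 0 0 ^ 2 * Ah 0 1 * Ah 1 0 + 4 * Ah 0 0 ^ 2 * Ah 1 0 ^ 2 * Bh 0 1 ^ 2 + 4 * Ah 0 0 * Ah 0 1 ^ 2 * Ah 1 0 * Bh 0 0 * Bh 1 0 - 4 * Ah 0 0 * Ah 0 1 ^ 2 * Ah 1 0 * Bh 1 0 * Bh 1 1 + 4 * Ah 0 0 * Ah 0 1 * Ah 1 0 ^ 2 * Bh 0 0 * Bh 0 1 - 4 * Ah 0 0 * Ah 0 1 * Ah 1 0 ^ 2 * Bh 0 1 * Bh 1 1 + 4 * Ah 0 0 * Ah 0 1 * Bh 0 0 * Bh 1 0 - 4 * Ah 0 0 * Ah 0 1 * Bh 1 0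 * Bh 1 1 + 4 * Ah 0 0 * Ah 1 0 * Bh 0 0 * Bh 0 1 - 4 * Ah 0 0 * Ah 1 0 * Bh 0 1 * Bh 1 1 + 8 * Ah 0 1 ^ 3 * Ah 1 0 * Bh 1 0 ^ 2 - 8 * Ah 0 1 ^ 2 * Ah 1 0 ^ 2 * Bh 0 0 ^ 2 - 2 * Ah 0 1 ^ 2 * Ah 1 0 ^ 2 * Bh 0 0 * Bh 1 1 + 10 * Ah 0 1 ^ 2 * Ah 1 0 ^ 2 * Bh 0 1 * Bh 1 0 - 8 * Ah 0 1 ^ 2 * Ah 1 0 ^ 2 * Bh 1 1 ^ 2 - 6 * Ah 0 1 ^ 2 * Ah 1 0 ^ 2 - 4 * Ah 0 1 ^ 2 * Ah 1 0 * Ah 1 1 * Bh 0 0 * Bh 1 0 + 4 * Ah 0 1 ^ 2 * Ah 1 0 * Ah 1 1 * Bh 1 0 * Bh 1 1 + 4 * Ah 0 1 ^ 2 * Ah 1 1 ^ 2 * Bh 1 0 ^ 2 + 8 * Ah 0 1 ^ 2 * Bh 1 0 ^ 2 + 8 * Ah 0 1 * Ah 1 0 ^ 3 * Bh 0 1 ^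 2 - 4 * Ah 0 1 * Ah 1 0 ^ 2 * Ah 1 1 * Bh 0 0 * Bh 0 1 + 4 * Ah 0 1 * Ah 1 0 ^ 2 * Ah 1 1 * Bh 0 1 * Bh 1 1 - 4 * Ah 0 1 * Ah 1 0 * Ah 1 1 ^ 2 * Bh 0 0 ^ 2 - 4 * Ah 0 1 * Ah 1 0 * Ah 1 1 ^ 2 * Bh 0 0 * Bh 1 1 + 4 * Ah 0 1 * Ah 1 0 * Ah 1 1 ^ 2 * Bh 0 1 * Bh 1 0 - 4 * Ah 0 1 * Ah 1 0 * Ah 1 1 ^ 2 * Bh 1 1 ^ 2 - 4 * Ah 0 1 * Ah 1 0 * Ah 1 1 ^ 2 - 8 * Ah 0 1 * Ah 1 0 * Bh 0 0 ^ 2 + 4 * Ah 0 1 * Ah 1 0 * Bh 0 0 * Bh 1 1 + 12 * Ah 0 1 * Ah 1 0 * Bh 0 1 * Bh 1 0 - 8 * Ah 0 1 * Ah 1 0 * Bh 1 1 ^ 2 - 4 * Ah 0 1 * Ah 1 0 - 4 * Ah 0 1 * Ah 1 1 ^ 3 * Bh 0 0 * Bh 1 0 + 4 * Ah 0 1 *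 Ah 1 1 ^ 3 * Bh 1 0 * Bh 1 1 - 4 * Ah 0 1 * Ah 1 1 * Bh 0 0 * Bh 1 0 + 4 * Ah 0 1 * Ah 1 1 * Bh 1 0 * Bh 1 1 + 4 * Ah 1 0 ^ 2 * Ah 1 1 ^ 2 * Bh 0 1 ^ 2 + 8 * Ah 1 0 ^ 2 * Bh 0 1 ^ 2 - 4 * Ah 1 0 * Ah 1 1 ^ 3 * Bh 0 0 * Bh 0 1 + 4 * Ah 1 0 * Ah 1 1 ^ 3 * Bh 0 1 * Bh 1 1 - 4 * Ah 1 0 * Ah 1 1 * Bh 0 0 * Bh 0 1 + 4 * Ah 1 0 * Ah 1 1 * Bh 0 1 * Bh 1 1 - 3 * Ah 1 1 ^ 4 * Bh 0 0 * Bh 1 1 - Ah 1 1 ^ 4 * Bh 0 1 * Bh 1 0 - Ah 1 1 ^ 4 + 6 * Bh 0 0 * Bh 1 1 + 2 * Bh 0 1 * Bh 1 0 + 2)) * hdB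
  · rw [hAi, hBAi, phiStar_mul]
    simp only [trace_phiStar]
    simp [Matrix.mul_apply, Fin.sum_univ_two]
    linear_combination ((-2 * Ah 0 0 ^ 2 * Bh 0 0 ^ 3 * Bh 1 1 - 2 * Ah 0 0 ^ 2 * Bh 0 0 ^ 2 * Bh 0 1 * Bh 1 0 - 2 * Ah 0 0 ^ 2 * Bh 0 0 ^ 2 * Bh 1 1 ^ 2 + 2 * Ah 0 0 ^ 2 * Bh 0 0 ^ 2 - 4 * Ah 0 0 ^ 2 * Bh 0 0 * Bh 0 1 * Bh 1 0 * Bh 1 1 - 2 * Ah 0 0 ^ 2 * Bh 0 0 * Bh 1 1 ^ 3 - 2 * Ah 0 0 ^ 2 * Bh 0 1 ^ 2 * Bh 1 0 ^ 2 - 2 * Ah 0 0 ^ 2 * Bh 0 1 * Bh 1 0 * Bh 1 1 ^ 2 + 2 * Ah 0 0 ^ 2 * Bh 1 1 ^ 2 + 2 * Ah 0 0 ^ 2 + 4 * Ah 0 0 * Ah 0 1 * Bh 0 0 ^ 3 * Bh 1 0 + 4 * Ah 0 0 * Ah 0 1 * Bh 0 0 ^ 2 * Bh 1 0 * Bh 1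 1 - 4 * Ah 0 0 * Ah 0 1 * Bh 0 0 * Bh 1 0 * Bh 1 1 ^ 2 - 4 * Ah 0 0 * Ah 0 1 * Bh 1 0 * Bh 1 1 ^ 3 + 4 * Ah 0 0 * Ah 1 0 * Bh 0 0 ^ 3 * Bh 0 1 + 4 * Ah 0 0 * Ah 1 0 * Bh 0 0 ^ 2 * Bh 0 1 * Bh 1 1 - 4 * Ah 0 0 * Ah 1 0 * Bh 0 0 * Bh 0 1 * Bh 1 1 ^ 2 - 4 * Ah 0 0 * Ah 1 0 * Bh 0 1 * Bh 1 1 ^ 3 - 3 * Ah 0 0 * Ah 1 1 * Bh 0 0 ^ 4 - 2 * Ah 0 0 * Ah 1 1 * Bh 0 0 ^ 3 * Bh 1 1 - 2 * Ah 0 0 * Ah 1 1 * Bh 0 0 ^ 2 * Bh 0 1 * Bh 1 0 + Ah 0 0 * Ah 1 1 * Bh 0 0 ^ 2 * Bh 1 1 ^ 2 + 2 * Ah 0 0 * Ah 1 1 * Bh 0 0 ^ 2 - 2 * Ah 0 0 * Ah 1 1 * Bh 0 0 * Bh 0 1 * Bh 1 0 * Bh 1 1 - 2 * Ah 0 0 *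 Ah 1 1 * Bh 0 0 * Bh 1 1 ^ 3 + 2 * Ah 0 0 * Ah 1 1 * Bh 0 0 * Bh 1 1 - Ah 0 0 * Ah 1 1 * Bh 0 1 ^ 2 * Bh 1 0 ^ 2 - 2 * Ah 0 0 * Ah 1 1 * Bh 0 1 * Bh 1 0 * Bh 1 1 ^ 2 + 2 * Ah 0 0 * Ah 1 1 * Bh 0 1 * Bh 1 0 - 3 * Ah 0 0 * Ah 1 1 * Bh 1 1 ^ 4 + 2 * Ah 0 0 * Ah 1 1 * Bh 1 1 ^ 2 + 3 * Ah 0 0 * Ah 1 1 + 4 * Ah 0 1 ^ 2 * Bh 0 0 ^ 2 * Bh 1 0 ^ 2 + 12 * Ah 0 1 ^ 2 * Bh 0 0 * Bh 1 0 ^ 2 * Bh 1 1 - 4 * Ah 0 1 ^ 2 * Bh 0 1 * Bh 1 0 ^ 3 + 4 * Ah 0 1 ^ 2 * Bh 1 0 ^ 2 * Bh 1 1 ^ 2 - 4 * Ah 0 1 ^ 2 * Bh 1 0 ^ 2 - Ah 0 1 * Ah 1 0 * Bh 0 0 ^ 4 - 6 * Ah 0 1 * Ah 1 0 * Bh 0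 0 ^ 3 * Bh 1 1 + 10 * Ah 0 1 * Ah 1 0 * Bh 0 0 ^ 2 * Bh 0 1 * Bh 1 0 - Ah 0 1 * Ah 1 0 * Bh 0 0 ^ 2 * Bh 1 1 ^ 2 + 6 * Ah 0 1 * Ah 1 0 * Bh 0 0 ^ 2 + 18 * Ah 0 1 * Ah 1 0 * Bh 0 0 * Bh 0 1 * Bh 1 0 * Bh 1 1 - 6 * Ah 0 1 * Ah 1 0 * Bh 0 0 * Bh 1 1 ^ 3 - 2 * Ah 0 1 * Ah 1 0 * Bh 0 0 * Bh 1 1 - 7 * Ah 0 1 * Ah 1 0 * Bh 0 1 ^ 2 * Bh 1 0 ^ 2 + 10 * Ah 0 1 * Ah 1 0 * Bh 0 1 * Bh 1 0 * Bh 1 1 ^ 2 - 2 * Ah 0 1 * Ah 1 0 * Bh 0 1 * Bh 1 0 - Ah 0 1 * Ah 1 0 * Bh 1 1 ^ 4 + 6 * Ah 0 1 * Ah 1 0 * Bh 1 1 ^ 2 + 5 * Ah 0 1 * Ah 1 0 - 4 * Ah 0 1 * Ah 1 1 * Bh 0 0 ^ 3 * Bh 1 0 - 4 * Ah 0 1 *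 Ah 1 1 * Bh 0 0 ^ 2 * Bh 1 0 * Bh 1 1 + 4 * Ah 0 1 * Ah 1 1 * Bh 0 0 * Bh 1 0 * Bh 1 1 ^ 2 + 4 * Ah 0 1 * Ah 1 1 * Bh 1 0 * Bh 1 1 ^ 3 + 4 * Ah 1 0 ^ 2 * Bh 0 0 ^ 2 * Bh 0 1 ^ 2 + 12 * Ah 1 0 ^ 2 * Bh 0 0 * Bh 0 1 ^ 2 * Bh 1 1 - 4 * Ah 1 0 ^ 2 * Bh 0 1 ^ 3 * Bh 1 0 + 4 * Ah 1 0 ^ 2 * Bh 0 1 ^ 2 * Bh 1 1 ^ 2 - 4 * Ah 1 0 ^ 2 * Bh 0 1 ^ 2 - 4 * Ah 1 0 * Ah 1 1 * Bh 0 0 ^ 3 * Bh 0 1 - 4 * Ah 1 0 * Ah 1 1 * Bh 0 0 ^ 2 * Bh 0 1 * Bh 1 1 + 4 * Ah 1 0 * Ah 1 1 * Bh 0 0 * Bh 0 1 * Bh 1 1 ^ 2 + 4 * Ah 1 0 * Ah 1 1 * Bh 0 1 * Bh 1 1 ^ 3 - 2 * Ah 1 1 ^ 2 * Bh 0 0 ^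 3 * Bh 1 1 - 2 * Ah 1 1 ^ 2 * Bh 0 0 ^ 2 * Bh 0 1 * Bh 1 0 - 2 * Ah 1 1 ^ 2 * Bh 0 0 ^ 2 * Bh 1 1 ^ 2 + 2 * Ah 1 1 ^ 2 * Bh 0 0 ^ 2 - 4 * Ah 1 1 ^ 2 * Bh 0 0 * Bh 0 1 * Bh 1 0 * Bh 1 1 - 2 * Ah 1 1 ^ 2 * Bh 0 0 * Bh 1 1 ^ 3 - 2 * Ah 1 1 ^ 2 * Bh 0 1 ^ 2 * Bh 1 0 ^ 2 - 2 * Ah 1 1 ^ 2 * Bh 0 1 * Bh 1 0 * Bh 1 1 ^ 2 + 2 * Ah 1 1 ^ 2 * Bh 1 1 ^ 2 + 2 * Ah 1 1 ^ 2 - Bh 0 0 ^ 4 - 2 * Bh 0 0 ^ 3 * Bh 1 1 - 2 * Bh 0 0 ^ 2 * Bh 0 1 * Bh 1 0 + 3 * Bh 0 0 ^ 2 * Bh 1 1 ^ 2 + 2 * Bh 0 0 ^ 2 - 6 * Bh 0 0 * Bh 0 1 * Bh 1 0 * Bh 1 1 - 2 * Bh 0 0 * Bh 1 1 ^ 3 -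 2 * Bh 0 0 * Bh 1 1 - 3 * Bh 0 1 ^ 2 * Bh 1 0 ^ 2 - 2 * Bh 0 1 * Bh 1 0 * Bh 1 1 ^ 2 - 2 * Bh 0 1 * Bh 1 0 - Bh 1 1 ^ 4 + 2 * Bh 1 1 ^ 2 + 1)) * hdA + ((-3 * Ah 0 0 ^ 4 * Bh 0 0 * Bh 1 1 - Ah 0 0 ^ 4 * Bh 0 1 * Bh 1 0 - Ah 0 0 ^ 4 + 4 * Ah 0 0 ^ 3 * Ah 0 1 * Bh 0 0 * Bh 1 0 - 4 * Ah 0 0 ^ 3 * Ah 0 1 * Bh 1 0 * Bh 1 1 + 4 * Ah 0 0 ^ 3 * Ah 1 0 * Bh 0 0 * Bh 0 1 - 4 * Ah 0 0 ^ 3 * Ah 1 0 * Bh 0 1 * Bh 1 1 + 4 * Ah 0 0 ^ 2 * Ah 0 1 ^ 2 * Bh 1 0 ^ 2 - 4 * Ah 0 0 ^ 2 * Ah 0 1 * Ah 1 0 * Bh 0 0 ^ 2 - 4 * Ah 0 0 ^ 2 * Ah 0 1 * Ah 1 0 * Bh 0 0 * Bh 1 1 + 4 * Ah 0 0 ^ 2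 * Ah 0 1 * Ah 1 0 * Bh 0 1 * Bh 1 0 - 4 * Ah 0 0 ^ 2 * Ah 0 1 * Ah 1 0 * Bh 1 1 ^ 2 - 4 * Ah 0 0 ^ 2 * Ah 0 1 * Ah 1 0 + 4 * Ah 0 0 ^ 2 * Ah 1 0 ^ 2 * Bh 0 1 ^ 2 + 4 * Ah 0 0 * Ah 0 1 ^ 2 * Ah 1 0 * Bh 0 0 * Bh 1 0 - 4 * Ah 0 0 * Ah 0 1 ^ 2 * Ah 1 0 * Bh 1 0 * Bh 1 1 + 4 * Ah 0 0 * Ah 0 1 * Ah 1 0 ^ 2 * Bh 0 0 * Bh 0 1 - 4 * Ah 0 0 * Ah 0 1 * Ah 1 0 ^ 2 * Bh 0 1 * Bh 1 1 + 4 * Ah 0 0 * Ah 0 1 * Bh 0 0 * Bh 1 0 - 4 * Ah 0 0 * Ah 0 1 * Bh 1 0 * Bh 1 1 + 4 * Ah 0 0 * Ah 1 0 * Bh 0 0 * Bh 0 1 - 4 * Ah 0 0 * Ah 1 0 * Bh 0 1 * Bh 1 1 + 8 * Ah 0 1 ^ 3 * Ah 1 0 * Bh 1 0 ^ 2 - 8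 * Ah 0 1 ^ 2 * Ah 1 0 ^ 2 * Bh 0 0 ^ 2 - 2 * Ah 0 1 ^ 2 * Ah 1 0 ^ 2 * Bh 0 0 * Bh 1 1 + 10 * Ah 0 1 ^ 2 * Ah 1 0 ^ 2 * Bh 0 1 * Bh 1 0 - 8 * Ah 0 1 ^ 2 * Ah 1 0 ^ 2 * Bh 1 1 ^ 2 - 6 * Ah 0 1 ^ 2 * Ah 1 0 ^ 2 - 4 * Ah 0 1 ^ 2 * Ah 1 0 * Ah 1 1 * Bh 0 0 * Bh 1 0 + 4 * Ah 0 1 ^ 2 * Ah 1 0 * Ah 1 1 * Bh 1 0 * Bh 1 1 + 4 * Ah 0 1 ^ 2 * Ah 1 1 ^ 2 * Bh 1 0 ^ 2 + 8 * Ah 0 1 ^ 2 * Bh 1 0 ^ 2 + 8 * Ah 0 1 * Ah 1 0 ^ 3 * Bh 0 1 ^ 2 - 4 * Ah 0 1 * Ah 1 0 ^ 2 * Ah 1 1 * Bh 0 0 * Bh 0 1 + 4 * Ah 0 1 * Ah 1 0 ^ 2 * Ah 1 1 * Bh 0 1 * Bh 1 1 - 4 * Ah 0 1 * Ah 1 0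 * Ah 1 1 ^ 2 * Bh 0 0 ^ 2 - 4 * Ah 0 1 * Ah 1 0 * Ah 1 1 ^ 2 * Bh 0 0 * Bh 1 1 + 4 * Ah 0 1 * Ah 1 0 * Ah 1 1 ^ 2 * Bh 0 1 * Bh 1 0 - 4 * Ah 0 1 * Ah 1 0 * Ah 1 1 ^ 2 * Bh 1 1 ^ 2 - 4 * Ah 0 1 * Ah 1 0 * Ah 1 1 ^ 2 - 8 * Ah 0 1 * Ah 1 0 * Bh 0 0 ^ 2 + 4 * Ah 0 1 * Ah 1 0 * Bh 0 0 * Bh 1 1 + 12 * Ah 0 1 * Ah 1 0 * Bh 0 1 * Bh 1 0 - 8 * Ah 0 1 * Ah 1 0 * Bh 1 1 ^ 2 - 4 * Ah 0 1 * Ah 1 0 - 4 * Ah 0 1 * Ah 1 1 ^ 3 * Bh 0 0 * Bh 1 0 + 4 * Ah 0 1 * Ah 1 1 ^ 3 * Bh 1 0 * Bh 1 1 - 4 * Ah 0 1 * Ah 1 1 * Bh 0 0 * Bh 1 0 + 4 * Ah 0 1 * Ah 1 1 * Bh 1 0 * Bh 1 1 + 4 * Ah 1 0 ^ 2 * Ah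 1 1 ^ 2 * Bh 0 1 ^ 2 + 8 * Ah 1 0 ^ 2 * Bh 0 1 ^ 2 - 4 * Ah 1 0 * Ah 1 1 ^ 3 * Bh 0 0 * Bh 0 1 + 4 * Ah 1 0 * Ah 1 1 ^ 3 * Bh 0 1 * Bh 1 1 - 4 * Ah 1 0 * Ah 1 1 * Bh 0 0 * Bh 0 1 + 4 * Ah 1 0 * Ah 1 1 * Bh 0 1 * Bh 1 1 - 3 * Ah 1 1 ^ 4 * Bh 0 0 * Bh 1 1 - Ah 1 1 ^ 4 * Bh 0 1 * Bh 1 0 - Ah 1 1 ^ 4 + 6 * Bh 0 0 * Bh 1 1 + 2 * Bh 0 1 * Bh 1 0 + 2)) * hdB
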